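/- arXiv:1501.03895 — 9 statements merged into one kernel-verified Lean document; each statement's English description precedes it below -/
import Mathlib

section
/- For every root-weighted tree automaton A over a graded alphabet Σ with weights in a commutative monoid M, there exists a sequential root-weighted tree automaton A' over Σ such that P_A = P_{A'}, i.e. P_A(t) = P_{A'}(t) for every tree t ∈ T_Σ. -/
/-- A tree over a graded alphabet `σ` with arity function `ar`. -/
inductive GTree (σ : Type) (ar : σ → ℕ) : Type
  | node (f : σ) (ts : Fin (ar f) → GTree σ ar) : GTree σ ar

/-- A root-weighted tree automaton (RWTA) over the graded alphabet `σ`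
with weights in `M`. -/
structure RWTA (σ : Type) (ar : σ → ℕ) (M : Type) where
  Q : Type
  fin : Finite Q := by infer_instance
  ν : Q → M
  δ : ∀ f : σ, (Fin (ar f) → Q) → Q → Prop

attribute [instance] RWTA.fin

variable {σ : Type} {ar : σ → ℕ} {M : Type}

/-- The reachability map `Δ_A`. -/
def RWTA.Delta (A : RWTA σ ar M) : GTree σ ar → Set A.Q
  | .node f ts => {q | ∃ qs : Fin (ar f) → A.Q,
      (∀ i, qs i ∈ A.Delta (ts i)) ∧ A.δ f qs q}

/-- The tree series realized by an RWTA: `P_A(t) = ν(Δ_A(t))`. -/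
noncomputable def RWTA.P [AddCommMonoid M] (A : RWTA σ ar M) (t : GTree σ ar) : M :=
  ∑ᶠ q ∈ A.Delta t, A.ν q

/-- An RWTA is sequential when `Card (Δ_A(t)) ≤ 1` for every tree. -/
def RWTA.Sequential (A : RWTA σ ar M) : Prop :=
  ∀ t : GTree σ ar, (A.Delta t).Subsingleton

/-- The down language of a state. -/
def RWTA.DownLang (A : RWTA σ ar M) (q : A.Q) : Set (GTree σ ar) :=
  {t | q ∈ A.Delta t}

/-- The sequential RWTA associated with `A` by the subset construction. -/
noncomputable def RWTA.subset [AddCommMonoid M] (A : RWTA σ ar M) : RWTA σ ar M where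
  Q := Set A.Q
  ν := fun S => ∑ᶠ q ∈ S, A.ν q
  δ := fun f Qs S =>
    S = {q | ∃ qs : Fin (ar f) → A.Q, (∀ i, qs i ∈ Qs i) ∧ A.δ f qs q}

/-- The accessible part of an RWTA. -/
def RWTA.acc (A : RWTA σ ar M) : RWTA σ ar M where
  Q := {q : A.Q // (A.DownLang q).Nonempty}
  ν := fun q => A.ν q.1
  δ := fun f qs q => A.δ f (fun i => (qs i).1) q.1

/-- The sum of two RWTAs (on the disjoint union of the state sets). -/
def RWTA.sum (A₁ A₂ : RWTA σ ar M) : RWTA σ ar M where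
  Q := A₁.Q ⊕ A₂.Q
  ν := Sum.elim A₁.ν A₂.ν
  δ := fun f qs q =>
    (∃ (qs' : Fin (ar f) → A₁.Q) (q' : A₁.Q),
        q = Sum.inl q' ∧ (∀ i, qs i = Sum.inl (qs' i)) ∧ A₁.δ f qs' q') ∨
    (∃ (qs' : Fin (ar f) → A₂.Q) (q' : A₂.Q),
        q = Sum.inr q' ∧ (∀ i, qs i = Sum.inr (qs' i)) ∧ A₂.δ f qs' q')

/-- The product of two RWTAs. -/
def RWTA.prod [Mul M] (A₁ A₂ : RWTA σ ar M) : RWTA σ ar M where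
  Q := A₁.Q × A₂.Q
  ν := fun q => A₁.ν q.1 * A₂.ν q.2
  δ := fun f qs q =>
    A₁.δ f (fun i => (qs i).1) q.1 ∧ A₂.δ f (fun i => (qs i).2) q.2

/-- The quotient of an RWTA by an equivalence relation on its states. -/
noncomputable def RWTA.quot [AddCommMonoid M] (A : RWTA σ ar M) (s : Setoid A.Q) :
    RWTA σ ar M where
  Q := Quotient s
  ν := fun C => ∑ᶠ q ∈ {q : A.Q | Quotient.mk s q = C}, A.ν q
  δ := fun f Cs C => ∃ (qs : Fin (ar f) → A.Q) (q : A.Q),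
    (∀ i, Quotient.mk s (qs i) = Cs i) ∧ Quotient.mk s q = C ∧ A.δ f qs q

/-- Relabelling of trees along a rank-preserving map of symbols. -/
def GTree.map {Γ : Type} {arΓ : Γ → ℕ} (g : σ → Γ) (hg : ∀ f, arΓ (g f) = ar f) :
    GTree σ ar → GTree Γ arΓ
  | .node f ts => .node (g f) (fun i => GTree.map g hg (ts (Fin.cast (hg f) i)))

/-- A morphism of RWTAs. -/
structure RWTA.Morphism {Γ : Type} {arΓ : Γ → ℕ}
    (A₁ : RWTA σ ar M) (A₂ : RWTA Γ arΓ M) where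
  stateMap : A₁.Q → A₂.Q
  symMap : σ → Γ
  symRank : ∀ f, arΓ (symMap f) = ar f
  transMap : ∀ (f : σ) (qs : Fin (ar f) → A₁.Q) (q : A₁.Q), A₁.δ f qs q →
    A₂.δ (symMap f) (fun i => stateMap (qs (Fin.cast (symRank f) i))) (stateMap q)
  weightMap : ∀ q, A₂.ν (stateMap q) = A₁.ν q

/-- Two RWTAs are isomorphic when there are mutually inverse morphisms between them. -/
def RWTA.Isomorphic {Γ : Type} {arΓ : Γ → ℕ}
    (A₁ : RWTA σ ar M) (A₂ : RWTA Γ arΓ M) : Prop :=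
  ∃ (μ : A₁.Morphism A₂) (μ' : A₂.Morphism A₁),
    (∀ q, μ'.stateMap (μ.stateMap q) = q) ∧ (∀ q, μ.stateMap (μ'.stateMap q) = q) ∧
    (∀ f, μ'.symMap (μ.symMap f) = f) ∧ (∀ f, μ.symMap (μ'.symMap f) = f)

/-- The size (number of nodes) of a tree. -/
def GTree.size : GTree σ ar → ℕ
  | .node _ ts => 1 + ∑ i, (ts i).size

/-- The set of subtrees of a tree. -/
def GTree.subTrees : GTree σ ar → Set (GTree σ ar)
  | .node f ts => insert (.node f ts) (⋃ i, (ts i).subTrees)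

theorem GTree.subTrees_finite (t : GTree σ ar) : t.subTrees.Finite := by
  induction t with
  | node f ts ih => exact Set.Finite.insert _ (Set.finite_iUnion fun i => ih i)

-- `t.subCount s` is the number of occurrences of `s` as a subtree of `t`,
-- i.e. `SubTreeSeries_t(s)`.
open Classical in
noncomputable def GTree.subCount : GTree σ ar → GTree σ ar → ℕ
  | .node f ts, s =>
      (if GTree.node f ts = s then 1 else 0) + ∑ i, (ts i).subCount s

/-- Indexing of the symbols of a tree by their position in a prefix traversal
(auxiliary function, threading the position of the root). -/
def GTree.sharpAux : GTree σ ar → ℕ → GTree (σ × ℕ) (fun p => ar p.1)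
  | .node f ts, n => .node (f, n) (fun i =>
      (ts i).sharpAux (n + 1 + ∑ j : Fin (ar f), if j.1 < i.1 then (ts j).size else 0))

/-- `t^♯`: the tree `t` with each symbol indexed by its prefix-traversal position. -/
def GTree.sharp (t : GTree σ ar) : GTree (σ × ℕ) (fun p => ar p.1) := t.sharpAux 0

/-- The map `h` dropping the indexes. -/
def GTree.unsharp : GTree (σ × ℕ) (fun p => ar p.1) → GTree σ ar :=
  GTree.map Prod.fst (fun _ => rfl)

/-- The subtree automaton `A_t` associated with a tree `t`. -/
def subtreeAut (t : GTree σ ar) : RWTA σ ar ℕ where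
  Q := {r // r ∈ t.sharp.subTrees}
  fin := (t.sharp.subTrees_finite).to_subtype
  ν := fun _ => 1
  δ := fun f qs q => ∃ n : ℕ,
    (q : GTree (σ × ℕ) (fun p => ar p.1)) = .node (f, n) (fun i => (qs i : GTree (σ × ℕ) (fun p => ar p.1)))

/-- The equivalence `∼_h` on the states of the subtree automaton. -/
def simH (t : GTree σ ar) : Setoid (subtreeAut t).Q :=
  Setoid.ker (fun r => GTree.unsharp r.1)

/-- The sequential subtree automaton `seq(A_t)` associated with a tree `t`. -/
noncomputable def seqSubtreeAut (t : GTree σ ar) : RWTA σ ar ℕ where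
  Q := {r // r ∈ t.subTrees}
  fin := (t.subTrees_finite).to_subtype
  ν := fun r => t.subCount r.1
  δ := fun f qs q => (q : GTree σ ar) = .node f (fun i => (qs i : GTree σ ar))

/-- `SubTreeSet(L)`. -/
def subTreeSet (L : Set (GTree σ ar)) : Set (GTree σ ar) := ⋃ t ∈ L, t.subTrees

/-- `SubTreeSeries_L`. -/
noncomputable def subSeriesL (L : Set (GTree σ ar)) (s : GTree σ ar) : ℕ :=
  ∑ᶠ t ∈ L, t.subCount s

/-- The sequential subtree automaton `A_L` associated with a finite tree language. -/
noncomputable def langSubtreeAut (L : Set (GTree σ ar)) (hL : L.Finite) : RWTA σ ar ℕ where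
  Q := {r // r ∈ subTreeSet L}
  fin := (hL.biUnion fun t _ => t.subTrees_finite).to_subtype
  ν := fun r => subSeriesL L r.1
  δ := fun f qs q => (q : GTree σ ar) = .node f (fun i => (qs i : GTree σ ar))


theorem rwta_sequentializable {σ : Type} {ar : σ → ℕ} {M : Type} [AddCommMonoid M]
    (A : RWTA σ ar M) :
    ∃ A' : RWTA σ ar M, A'.Sequential ∧ ∀ t : GTree σ ar, A.P t = A'.P t := by
  have key : ∀ t : GTree σ ar, A.subset.Delta t = {A.Delta t} := by
    intro t
    induction t with
    | node f ts ih =>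
      ext S
      simp only [RWTA.Delta, Set.mem_setOf_eq, Set.mem_singleton_iff]
      constructor
      · rintro ⟨Ss, hSs, hS⟩
        have hfun : Ss = fun i => A.Delta (ts i) := funext fun i => by
          have := hSs i; rw [ih i] at this; exact this
        subst hS hfun
        rfl
      · rintro rfl
        exact ⟨fun i => A.Delta (ts i), fun i => by rw [ih i]; rfl, rfl⟩
  refine ⟨A.subset, fun t => by rw [key t]; exact Set.subsingleton_singleton, fun t => ?_⟩
  show A.P t = ∑ᶠ S ∈ A.subset.Delta t, A.subset.ν S
  rw [key t]; refine Eq.trans ?_ (finsum_mem_singleton (f := A.subset.ν) (a := (A.Delta t : A.subset.Q))).symm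
  rfl
end

section
/- Let A be an RWTA over a graded alphabet Σ with weights in a commutative monoid M, and let A' be the sequential RWTA associated with A by the subset construction. Then A' is sequential (Card(Δ_{A'}(t)) ≤ 1 for every t ∈ T_Σ) and P_{A'}(t) = P_A(t) for every tree t ∈ T_Σ. -/
variable {σ : Type} {ar : σ → ℕ} {M : Type}

theorem subset_delta_eq {σ : Type} {ar : σ → ℕ} {M : Type} [AddCommMonoid M]
    (A : RWTA σ ar M) (t : GTree σ ar) : A.subset.Delta t = {A.Delta t} := by
  induction t with
  | node f ts ih =>
    ext S
    simp only [RWTA.Delta, Set.mem_singleton_iff, Set.mem_setOf_eq]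
    constructor
    · rintro ⟨Ss, hSs, hδ⟩
      have hS : ∀ i, Ss i = A.Delta (ts i) := fun i => by
        have := hSs i; rw [ih i] at this; exact this
      simp only [RWTA.subset] at hδ
      subst hδ
      apply Set.ext; intro q
      simp only [RWTA.Delta, Set.mem_setOf_eq, hS]
    · rintro rfl
      refine ⟨fun i => A.Delta (ts i), fun i => by rw [ih i]; rfl, ?_⟩
      show _ = _
      apply Set.ext; intro q
      simp only [RWTA.Delta, Set.mem_setOf_eq]

theorem subset_sequential_and_realizes {σ : Type} {ar : σ → ℕ} {M : Type} [AddCommMonoid M]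
    (A : RWTA σ ar M) :
    A.subset.Sequential ∧ ∀ t : GTree σ ar, A.subset.P t = A.P t := by
  constructor
  · intro t
    rw [subset_delta_eq]
    exact Set.subsingleton_singleton
  · intro t
    unfold RWTA.P
    rw [subset_delta_eq]; erw [finsum_mem_singleton]
    rfl
end

section
/- Let A_1 and A_2 be two RWTAs over the same graded alphabet Σ with weights in a semiring K. Then for every tree t ∈ T_Σ, P_{A_1×A_2}(t) = P_{A_1}(t) × P_{A_2}(t). -/
variable {σ : Type} {ar : σ → ℕ} {M : Type}

lemma finsum_mem_prod_mul {α β K : Type*} [Semiring K] {s : Set α} {t : Set β}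
    (hs : s.Finite) (ht : t.Finite) (f : α → K) (g : β → K) :
    (∑ᶠ p ∈ s ×ˢ t, f p.1 * g p.2) = (∑ᶠ a ∈ s, f a) * (∑ᶠ b ∈ t, g b) := by
  rw [finsum_mem_eq_finite_toFinset_sum _ (hs.prod ht),
    finsum_mem_eq_finite_toFinset_sum _ hs, finsum_mem_eq_finite_toFinset_sum _ ht,
    show (hs.prod ht).toFinset = hs.toFinset ×ˢ ht.toFinset from by ext p; simp,
    Finset.sum_product, Finset.sum_mul_sum]

lemma Delta_prod {σ : Type} {ar : σ → ℕ} {K : Type} [Semiring K]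
    (A₁ A₂ : RWTA σ ar K) (t : GTree σ ar) :
    (A₁.prod A₂).Delta t = A₁.Delta t ×ˢ A₂.Delta t := by
  induction t with
  | node f ts ih =>
    ext q
    simp only [RWTA.Delta, Set.mem_setOf_eq, Set.mem_prod]
    constructor
    · rintro ⟨qs, hqs, hδ⟩
      exact ⟨⟨fun i => (qs i).1, fun i => ((ih i ▸ hqs i : qs i ∈ _ ×ˢ _)).1, hδ.1⟩,
        ⟨fun i => (qs i).2, fun i => ((ih i ▸ hqs i : qs i ∈ _ ×ˢ _)).2, hδ.2⟩⟩
    · rintro ⟨⟨qs₁, hqs₁, hδ₁⟩, ⟨qs₂, hqs₂, hδ₂⟩⟩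
      exact ⟨fun i => (qs₁ i, qs₂ i),
        fun i => (ih i).symm ▸ (Set.mk_mem_prod (hqs₁ i) (hqs₂ i)), hδ₁, hδ₂⟩

theorem prod_series {σ : Type} {ar : σ → ℕ} {K : Type} [Semiring K]
    (A₁ A₂ : RWTA σ ar K) (t : GTree σ ar) :
    (A₁.prod A₂).P t = A₁.P t * A₂.P t := by
  unfold RWTA.P
  rw [Delta_prod]
  exact finsum_mem_prod_mul (Set.toFinite _) (Set.toFinite _) A₁.ν A₂.ν
end

section
/- Let Σ be the graded alphabet with Σ_0 = {a,b} and Σ_2 = {f}. There exist formal tree series P_1 and P_2 over the semiring ℕ, each realized by an RWTA over Σ, such that the image Im(P_1 ·_a P_2) of their a-product is infinite. (Concretely, one may take P_1 the characteristic series of the a-closure (f(a,b))^{*_a} and P_2 the series mapping a to 2 and every other tree to 0; then (P_1 ·_a P_2)(t) = 2^{height(t)} for every t in the a-closure.) -/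
variable {σ : Type} {ar : σ → ℕ} {M : Type}

-- concrete alphabet for stmts 8/9
/-- The graded alphabet with `Σ_0 = {a,b}` and `Σ_2 = {f}`. -/
inductive ABF : Type | a | b | f

/-- The arity function: `a` and `b` are constants, `f` is binary. -/
def arABF : ABF → ℕ | .a => 0 | .b => 0 | .f => 2

/-- Substitution of the (unique tree of the) language `{s}` for the
constant symbol `a` in a tree, i.e. the unique element of `t_{a ← {s}}`. -/
def substA : GTree ABF arABF → GTree ABF arABF → GTree ABF arABF
  | .node .a _, s => s
  | .node .b ts, _ => .node .b ts
  | .node .f ts, s => .node .f (fun i => substA (ts i) s)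

/-- The `a`-product of two tree series over `ℕ`. -/
noncomputable def aProd (P₁ P₂ : GTree ABF arABF → ℕ) (t : GTree ABF arABF) : ℕ :=
  ∑ᶠ p ∈ {p : GTree ABF arABF × GTree ABF arABF | substA p.1 p.2 = t}, P₁ p.1 * P₂ p.2


-- ===== auxiliary development =====
namespace AProdAux

def leafB : GTree ABF arABF := .node .b (fun i => i.elim0)

def comb : ℕ → GTree ABF arABF
  | 0 => .node .a (fun i => i.elim0)
  | n+1 => .node .f (fun i => if i.1 = 0 then comb n else leafB)

lemma comb_ne_leafB (k : ℕ) : comb k ≠ leafB := by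
  cases k <;> simp [comb, leafB]

lemma comb_inj : Function.Injective comb := by
  intro k
  induction k with
  | zero => intro m h; cases m with
    | zero => rfl
    | succ m => simp [comb] at h
  | succ k ih =>
    intro m h
    cases m with
    | zero => simp [comb] at h
    | succ m =>
      simp only [comb, GTree.node.injEq, heq_eq_eq, true_and] at h
      have := congrFun h ⟨0, by norm_num [arABF]⟩
      simp at this
      exact congrArg Nat.succ (ih this)

lemma substA_leafB (s : GTree ABF arABF) : substA leafB s = leafB := rfl

lemma substA_comb (k m : ℕ) : substA (comb k) (comb m) = comb (k + m) := by
  induction k with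
  | zero => simp [comb, substA]
  | succ k ih =>
    rw [show k + 1 + m = (k + m) + 1 from by omega]
    simp only [comb, substA]
    congr 1
    funext i
    by_cases hi : i.1 = 0 <;> simp [hi, ih, substA_leafB]


/-- Automaton recognizing the comb language (state `true`) and `{b}` (state `false`). -/
def combAut : RWTA ABF arABF ℕ where
  Q := Bool
  ν := fun q => if q then 1 else 0
  δ := fun f qs q => match f with
    | .a => q = true
    | .b => q = false
    | .f => qs ⟨0, by norm_num [arABF]⟩ = true ∧ qs ⟨1, by norm_num [arABF]⟩ = false ∧ q = true

lemma delta_char (t : GTree ABF arABF) :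
    (true ∈ combAut.Delta t ↔ t ∈ Set.range comb) ∧
    (false ∈ combAut.Delta t ↔ t = leafB) := by
  induction t with
  | node f ts ih =>
    cases f with
    | a =>
      constructor
      · constructor
        · intro _
          refine ⟨0, ?_⟩
          show GTree.node ABF.a _ = GTree.node ABF.a _
          congr 1
          funext i
          exact i.elim0
        · intro _
          exact ⟨fun i => i.elim0, fun i => i.elim0, rfl⟩
      · constructor
        · rintro ⟨qs, -, h⟩
          exact absurd h (by simp [combAut])
        · intro h
          exact absurd h (by simp [leafB])
    | b =>
      constructor
      · constructor
        · rintro ⟨qs, -, h⟩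
          exact absurd h (by simp [combAut])
        · rintro ⟨k, hk⟩
          exact absurd hk.symm (by cases k <;> simp [comb])
      · constructor
        · intro _
          show GTree.node ABF.b _ = GTree.node ABF.b _
          congr 1
          funext i
          exact i.elim0
        · intro _
          exact ⟨fun i => i.elim0, fun i => i.elim0, rfl⟩
    | f =>
      have i0 : Fin (arABF ABF.f) := ⟨0, by norm_num [arABF]⟩
      have i1 : Fin (arABF ABF.f) := ⟨1, by norm_num [arABF]⟩
      constructor
      · constructor
        · rintro ⟨qs, hqs, h0, h1, -⟩
          have ht0 : ts ⟨0, by norm_num [arABF]⟩ ∈ Set.range comb :=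
            (ih _).1.mp (by have := hqs ⟨0, by norm_num [arABF]⟩; rwa [h0] at this)
          have ht1 : ts ⟨1, by norm_num [arABF]⟩ = leafB :=
            (ih _).2.mp (by have := hqs ⟨1, by norm_num [arABF]⟩; rwa [h1] at this)
          obtain ⟨k, hk⟩ := ht0
          refine ⟨k + 1, ?_⟩
          show GTree.node ABF.f _ = GTree.node ABF.f _
          congr 1
          funext i
          rcases i with ⟨iv, hi⟩
          have hi2 : iv < 2 := by simpa [arABF] using hi
          interval_cases iv
          · simpa using hk
          · simpa using ht1.symm
        · rintro ⟨k, hk⟩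
          cases k with
          | zero => exact absurd hk.symm (by simp [comb])
          | succ k =>
            simp only [comb, GTree.node.injEq, heq_eq_eq, true_and] at hk
            refine ⟨fun i => if i.1 = 0 then true else false, ?_, by simp, by simp, rfl⟩
            intro i
            rcases i with ⟨iv, hi⟩
            have hi2 : iv < 2 := by simpa [arABF] using hi
            have := congrFun hk ⟨iv, hi⟩
            interval_cases iv
            · simp only [if_pos rfl]
              exact (ih _).1.mpr ⟨k, by simpa using this⟩
            · simp only [Nat.one_ne_zero, if_false]
              exact (ih _).2.mpr (by simpa using this.symm)
      · constructor
        · rintro ⟨qs, -, h⟩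
          exact absurd h (by simp [combAut])
        · intro h
          exact absurd h (by simp [leafB])

open Classical in
/-- The characteristic series of the comb language. -/
noncomputable def Pcomb : GTree ABF arABF → ℕ :=
  fun t => if t ∈ Set.range comb then 1 else 0

lemma combAut_P (t : GTree ABF arABF) : combAut.P t = Pcomb t := by
  classical
  unfold RWTA.P Pcomb
  by_cases h : t ∈ Set.range comb
  · have hD : combAut.Delta t = {(true : combAut.Q)} := by
      ext q
      cases q
      · constructor
        · intro hf
          obtain ⟨k, hk⟩ := h
          exact absurd (hk ▸ (delta_char t).2.mp hf) (comb_ne_leafB k)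
        · intro hq
          exact absurd (Set.mem_singleton_iff.mp hq) Bool.false_ne_true
      · exact iff_of_true ((delta_char t).1.mpr h) rfl
    rw [hD]; erw [finsum_mem_singleton]; rw [if_pos h]
    rfl
  · have hD : combAut.Delta t ⊆ {(false : combAut.Q)} := by
      intro q hq
      cases q
      · rfl
      · exact absurd ((delta_char t).1.mp hq) h
    rw [if_neg h]
    rcases Set.subset_singleton_iff_eq.mp hD with h0 | h1
    · rw [h0, finsum_mem_empty]
    · rw [h1]; erw [finsum_mem_singleton]
      rfl


lemma aProd_comb (n : ℕ) : aProd Pcomb Pcomb (comb n) = n + 1 := by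
  classical
  unfold aProd
  set S : Set (GTree ABF arABF × GTree ABF arABF) := {p | substA p.1 p.2 = comb n} with hS
  set F : Finset (GTree ABF arABF × GTree ABF arABF) :=
    (Finset.Iic n).image (fun k => (comb k, comb (n - k))) with hF
  have hind : Set.indicator S (fun p => Pcomb p.1 * Pcomb p.2) =
      Set.indicator (↑F) (fun _ => 1) := by
    funext p
    by_cases hp : p ∈ F
    · obtain ⟨k, hk, rfl⟩ := Finset.mem_image.mp hp
      have hkn : k ≤ n := Finset.mem_Iic.mp hk
      have hmem : (comb k, comb (n - k)) ∈ S := by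
        show substA (comb k) (comb (n - k)) = comb n
        rw [substA_comb, Nat.add_sub_cancel' hkn]
      rw [Set.indicator_of_mem hmem, Set.indicator_of_mem (by exact_mod_cast hp)]
      simp [Pcomb]
    · rw [Set.indicator_of_notMem (show p ∉ (↑F : Set _) by exact_mod_cast hp)]
      by_cases hmem : p ∈ S
      · rw [Set.indicator_of_mem hmem]
        by_contra hne
        have h1 : Pcomb p.1 ≠ 0 := fun h => hne (by simp [h])
        have h2 : Pcomb p.2 ≠ 0 := fun h => hne (by simp [h])
        obtain ⟨k, hk⟩ : p.1 ∈ Set.range comb := by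
          by_contra h; exact h1 (by simp [Pcomb, h])
        obtain ⟨m, hm⟩ : p.2 ∈ Set.range comb := by
          by_contra h; exact h2 (by simp [Pcomb, h])
        have hsub : substA (comb k) (comb m) = comb n := by
          rw [hk, hm]; exact hmem
        rw [substA_comb] at hsub
        have hkm : k + m = n := comb_inj hsub
        apply hp
        refine Finset.mem_image.mpr ⟨k, Finset.mem_Iic.mpr (by omega), ?_⟩
        have : n - k = m := by omega
        rw [this, hk, hm]
      · rw [Set.indicator_of_notMem hmem]
  calc ∑ᶠ p ∈ S, Pcomb p.1 * Pcomb p.2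
      = ∑ᶠ p ∈ (↑F : Set (GTree ABF arABF × GTree ABF arABF)), (1 : ℕ) := by
        rw [finsum_mem_def S, finsum_mem_def (↑F : Set (GTree ABF arABF × GTree ABF arABF)) (fun _ => (1:ℕ)), hind]
    _ = ∑ p ∈ F, (1 : ℕ) := finsum_mem_coe_finset _ _
    _ = F.card := (Finset.card_eq_sum_ones F).symm
    _ = n + 1 := by
        rw [hF, Finset.card_image_of_injective _ (fun a b h => comb_inj (congrArg Prod.fst h))]
        simp

end AProdAux

theorem aProd_image_infinite :
    ∃ P₁ P₂ : GTree ABF arABF → ℕ,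
      (∃ A₁ : RWTA ABF arABF ℕ, ∀ t, A₁.P t = P₁ t) ∧
      (∃ A₂ : RWTA ABF arABF ℕ, ∀ t, A₂.P t = P₂ t) ∧
      (Set.range (aProd P₁ P₂)).Infinite := by
  refine ⟨AProdAux.Pcomb, AProdAux.Pcomb,
    ⟨AProdAux.combAut, AProdAux.combAut_P⟩, ⟨AProdAux.combAut, AProdAux.combAut_P⟩, ?_⟩
  apply Set.infinite_of_injective_forall_mem
    (f := fun n : ℕ => n + 1) (add_left_injective 1)
  intro n
  exact ⟨AProdAux.comb n, AProdAux.aProd_comb n⟩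
end

section
/- Let Σ be the graded alphabet with Σ_0 = {a,b} and Σ_2 = {f}. The class of tree series realized by RWTAs over Σ with weights in the semiring ℕ is not closed under a-product: there exist RWTAs A_1 and A_2 over Σ such that no RWTA realizes the series P_{A_1} ·_a P_{A_2}. -/
variable {σ : Type} {ar : σ → ℕ} {M : Type}

namespace AProdAux

abbrev T := GTree ABF arABF

def bb : T := .node .b (fun i => i.elim0)
def aa : T := .node .a (fun i => i.elim0)
def fN (x y : T) : T := .node .f ![x, y]

def c : ℕ → T
  | 0 => bb
  | n+1 => fN (c n) bb

def countA : T → ℕ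
  | .node .a _ => 1
  | .node .b _ => 0
  | .node .f ts => countA (ts ⟨0, by decide⟩) + countA (ts ⟨1, by decide⟩)

example {α : Type} (x y : α) (h : (0:ℕ) < 2) : ![x,y] (⟨0, h⟩ : Fin 2) = x := rfl
example {α : Type} (x y : α) (h : (1:ℕ) < 2) : ![x,y] (⟨1, h⟩ : Fin 2) = y := rfl

lemma fin0_eq {α : Type} (g h : Fin 0 → α) : g = h := funext fun i => i.elim0

lemma anode_eq (ts : Fin (arABF .a) → T) : GTree.node ABF.a ts = aa := by
  unfold aa; congr 1; exact fin0_eq _ _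

lemma bnode_eq (ts : Fin (arABF .b) → T) : GTree.node ABF.b ts = bb := by
  unfold bb; congr 1; exact fin0_eq _ _

lemma fnode_eq (ts : Fin (arABF .f) → T) :
    GTree.node ABF.f ts = fN (ts ⟨0, by decide⟩) (ts ⟨1, by decide⟩) := by
  unfold fN; congr 1; funext i
  rcases i with ⟨iv, hi⟩
  have hi' : iv < 2 := hi
  interval_cases iv <;> rfl

lemma fN_inj {x y x' y' : T} (h : fN x y = fN x' y') : x = x' ∧ y = y' := by
  unfold fN at h
  replace h := GTree.node.inj h
  obtain ⟨-, h⟩ := h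
  have h' : ![x, y] = ![x', y'] := eq_of_heq h
  have h0 := congrFun h' (⟨0, by decide⟩ : Fin 2)
  have h1 := congrFun h' (⟨1, by decide⟩ : Fin 2)
  simp at h0 h1
  exact ⟨h0, h1⟩

lemma substA_fN (x y s : T) : substA (fN x y) s = fN (substA x s) (substA y s) := by
  unfold fN
  rw [show substA (GTree.node ABF.f ![x,y]) s
      = GTree.node ABF.f (fun i => substA (![x,y] i) s) from rfl]
  congr 1; funext i
  rcases i with ⟨iv, hi⟩
  have hi' : iv < 2 := hi
  interval_cases iv <;> rfl

lemma substA_aa (s : T) : substA aa s = s := rfl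
lemma substA_bb (s : T) : substA bb s = bb := rfl

lemma countA_fN (x y : T) : countA (fN x y) = countA x + countA y := rfl
lemma countA_aa : countA aa = 1 := rfl
lemma countA_bb : countA bb = 0 := rfl

end AProdAux
namespace AProdAux

def e : ℕ → ℕ → T
  | 0, _ => aa
  | n+1, 0 => fN (c n) aa
  | n+1, k+1 => fN (e n k) bb

lemma e_zero (k : ℕ) : e 0 k = aa := by cases k <;> simp [e]
lemma e_succ_zero (n : ℕ) : e (n+1) 0 = fN (c n) aa := by simp [e]
lemma e_succ_succ (n k : ℕ) : e (n+1) (k+1) = fN (e n k) bb := by simp [e]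
lemma c_succ (n : ℕ) : c (n+1) = fN (c n) bb := by simp [c]

lemma fN_ne_bb (x y : T) : fN x y ≠ bb := by
  intro h; unfold fN bb at h; replace h := GTree.node.inj h; exact absurd h.1 (by simp)

lemma fN_ne_aa (x y : T) : fN x y ≠ aa := by
  intro h; unfold fN aa at h; replace h := GTree.node.inj h; exact absurd h.1 (by simp)

lemma aa_ne_bb : aa ≠ bb := by
  intro h; unfold aa bb at h; rw [GTree.node.injEq] at h; exact absurd h.1 (by simp)

lemma c_ne_bb_succ (n : ℕ) : c (n+1) ≠ bb := by rw [c_succ]; exact fN_ne_bb _ _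

/-- if a tree has no `a`, substitution is the identity -/
lemma substA_self (t : T) (s : T) (h : countA t = 0) : substA t s = t := by
  induction t with
  | node g ts ih =>
    cases g with
    | a => rw [anode_eq] at h ⊢; simp [countA_aa] at h
    | b => rw [bnode_eq]; exact substA_bb s
    | f =>
      rw [fnode_eq] at h ⊢
      rw [countA_fN] at h
      rw [substA_fN]
      rw [ih ⟨0, by decide⟩ (by omega), ih ⟨1, by decide⟩ (by omega)]

lemma countA_c (n : ℕ) : countA (c n) = 0 := by
  induction n with
  | zero => exact countA_bb
  | succ n ih => rw [c_succ, countA_fN, ih, countA_bb]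

lemma substA_e (n k : ℕ) (hk : k ≤ n) : substA (e n k) bb = c n := by
  induction n generalizing k with
  | zero => rw [e_zero]; rfl
  | succ n ih =>
    cases k with
    | zero =>
      rw [e_succ_zero, substA_fN, substA_aa, substA_self _ _ (countA_c n), c_succ]
    | succ k =>
      rw [e_succ_succ, substA_fN, substA_bb, ih k (by omega), c_succ]

lemma countA_e (n k : ℕ) (hk : k ≤ n) : countA (e n k) = 1 := by
  induction n generalizing k with
  | zero => rw [e_zero]; rfl
  | succ n ih =>
    cases k with
    | zero => rw [e_succ_zero, countA_fN, countA_c, countA_aa]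
    | succ k => rw [e_succ_succ, countA_fN, ih k (by omega), countA_bb]

lemma e_inj (n : ℕ) : ∀ k k', k ≤ n → k' ≤ n → e n k = e n k' → k = k' := by
  induction n with
  | zero => intro k k' hk hk' _; omega
  | succ n ih =>
    intro k k' hk hk' h
    cases k with
    | zero =>
      cases k' with
      | zero => rfl
      | succ k' =>
        rw [e_succ_zero, e_succ_succ] at h
        exact absurd (fN_inj h).2 aa_ne_bb
    | succ k =>
      cases k' with
      | zero =>
        rw [e_succ_zero, e_succ_succ] at h
        exact absurd (fN_inj h).2 aa_ne_bb.symm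
      | succ k' =>
        rw [e_succ_succ, e_succ_succ] at h
        have := ih k k' (by omega) (by omega) (fN_inj h).1
        omega

/-- characterization of preimages -/
lemma subst_eq_c (n : ℕ) : ∀ t : T, substA t bb = c n → countA t = 1 →
    ∃ k ≤ n, t = e n k := by
  induction n with
  | zero =>
    intro t h hc
    induction t with
    | node g ts _ =>
      cases g with
      | a => exact ⟨0, le_refl 0, by rw [anode_eq, e_zero]⟩
      | b => rw [bnode_eq] at hc; simp [countA_bb] at hc
      | f =>
        rw [fnode_eq, substA_fN] at h
        exact absurd h (fN_ne_bb _ _)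
  | succ n ih =>
    intro t h hc
    induction t with
    | node g ts _ =>
      cases g with
      | a =>
        rw [anode_eq, substA_aa] at h
        exact absurd h.symm (c_ne_bb_succ n)
      | b =>
        rw [bnode_eq] at hc; simp [countA_bb] at hc
      | f =>
        rw [fnode_eq] at h hc ⊢
        rw [substA_fN, c_succ] at h
        obtain ⟨h1, h2⟩ := fN_inj h
        rw [countA_fN] at hc
        rcases Nat.eq_zero_or_pos (countA (ts ⟨0, by decide⟩)) with h0 | h0
        · have hl : ts ⟨0, by decide⟩ = c n := by
            rw [← h1, substA_self _ _ h0]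
          have hr : countA (ts ⟨1, by decide⟩) = 1 := by omega
          have hraa : ts ⟨1, by decide⟩ = aa := by
            generalize hu : ts ⟨1, by decide⟩ = u at h2 hr
            induction u with
            | node g' ts' _ =>
              cases g' with
              | a => exact anode_eq ts'
              | b => rw [bnode_eq] at hr; simp [countA_bb] at hr
              | f => rw [fnode_eq, substA_fN] at h2; exact absurd h2 (fN_ne_bb _ _)
          exact ⟨0, by omega, by rw [hl, hraa, e_succ_zero]⟩
        · have hl1 : countA (ts ⟨0, by decide⟩) = 1 := by omega
          have hr0 : countA (ts ⟨1, by decide⟩) = 0 := by omega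
          obtain ⟨k, hk, hek⟩ := ih _ h1 hl1
          have hr : ts ⟨1, by decide⟩ = bb := by
            rw [← h2, substA_self _ _ hr0]
          exact ⟨k+1, by omega, by rw [hek, hr, e_succ_succ]⟩

end AProdAux
namespace AProdAux

/-- counts trees with exactly one `a` -/
abbrev A1 : RWTA ABF arABF ℕ where
  Q := Fin 2
  ν := fun q => q.val
  δ := fun g qs q => match g with
    | .a => q = 1
    | .b => q = 0
    | .f => q.val = (qs ⟨0, by decide⟩).val + (qs ⟨1, by decide⟩).val

/-- accepts only `bb`, with weight 1 -/
abbrev A2 : RWTA ABF arABF ℕ where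
  Q := Fin 1
  ν := fun _ => 1
  δ := fun g _ _ => match g with | .b => True | _ => False

lemma Delta_A1 (t : T) : A1.Delta t = {q : Fin 2 | q.val = countA t} := by
  induction t with
  | node g ts ih =>
    ext q
    simp only [RWTA.Delta, Set.mem_setOf_eq]
    cases g with
    | a =>
      constructor
      · rintro ⟨qs, -, hq⟩
        have hq' : q = 1 := hq
        subst hq'
        rw [anode_eq, countA_aa]
        rfl
      · intro hq
        refine ⟨fun i => i.elim0, fun i => i.elim0, ?_⟩
        rw [anode_eq, countA_aa] at hq
        show q = 1
        exact Fin.ext hq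
    | b =>
      constructor
      · rintro ⟨qs, -, hq⟩
        have hq' : q = 0 := hq
        subst hq'
        rw [bnode_eq, countA_bb]
        rfl
      · intro hq
        refine ⟨fun i => i.elim0, fun i => i.elim0, ?_⟩
        rw [bnode_eq, countA_bb] at hq
        show q = 0
        exact Fin.ext hq
    | f =>
      rw [fnode_eq, countA_fN]
      constructor
      · rintro ⟨qs, hqs, hq⟩
        have hq' : q.val = (qs ⟨0, by decide⟩).val + (qs ⟨1, by decide⟩).val := hq
        clear hq
        have h0 := hqs ⟨0, by decide⟩
        have h1 := hqs ⟨1, by decide⟩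
        rw [ih ⟨0, by decide⟩] at h0
        rw [ih ⟨1, by decide⟩] at h1
        simp only [Set.mem_setOf_eq] at h0 h1
        omega
      · intro hq
        have hb0 : countA (ts ⟨0, by decide⟩) < 2 := by
          have := q.isLt; omega
        have hb1 : countA (ts ⟨1, by decide⟩) < 2 := by
          have := q.isLt; omega
        refine ⟨![⟨countA (ts ⟨0, by decide⟩), hb0⟩, ⟨countA (ts ⟨1, by decide⟩), hb1⟩],
          ?_, ?_⟩
        · intro i
          rcases i with ⟨iv, hi⟩
          have hi' : iv < 2 := hi
          interval_cases iv
          · rw [ih ⟨0, by decide⟩]; exact rfl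
          · rw [ih ⟨1, by decide⟩]; exact rfl
        · show q.val = countA (ts ⟨0, by decide⟩) + countA (ts ⟨1, by decide⟩)
          exact hq

lemma P_A1_one (t : T) (h : countA t = 1) : A1.P t = 1 := by
  rw [RWTA.P, Delta_A1, h]
  have : {q : Fin 2 | q.val = 1} = {(1 : Fin 2)} := by
    ext q; simp [Fin.ext_iff]
  rw [this, finsum_mem_singleton]
  rfl

lemma P_A1_ne (t : T) (h : countA t ≠ 1) : A1.P t = 0 := by
  rw [RWTA.P, Delta_A1]
  rcases hn : countA t with - | n
  · have : {q : Fin 2 | q.val = 0} = {(0 : Fin 2)} := by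
      ext q; show q.val = 0 ↔ q = 0
      exact ⟨fun h => Fin.ext h, fun h => by rw [h]; rfl⟩
    rw [this, finsum_mem_singleton]
    rfl
  · rcases n with - | n
    · exact absurd hn h
    · have : {q : Fin 2 | q.val = n + 1 + 1} = (∅ : Set (Fin 2)) := by
        ext q; simp; omega
      rw [this, finsum_mem_empty]

lemma P_A2_bb : A2.P bb = 1 := by
  rw [RWTA.P]
  have : A2.Delta bb = (Set.univ : Set (Fin 1)) := by
    ext q
    simp only [bb, RWTA.Delta, Set.mem_setOf_eq, Set.mem_univ, iff_true]
    exact ⟨fun i => i.elim0, fun i => i.elim0, trivial⟩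
  rw [this, finsum_mem_univ, finsum_eq_sum_of_fintype]
  rfl

lemma P_A2_ne (t : T) (h : t ≠ bb) : A2.P t = 0 := by
  rw [RWTA.P]
  have : A2.Delta t = ∅ := by
    rcases t with ⟨g, ts⟩
    ext q
    simp only [RWTA.Delta, Set.mem_setOf_eq, Set.mem_empty_iff_false, iff_false]
    rintro ⟨qs, -, hq⟩
    cases g with
    | a => exact hq
    | b => exact h (bnode_eq ts)
    | f => exact hq
  rw [this, finsum_mem_empty]

lemma aProd_c (n : ℕ) : aProd A1.P A2.P (c n) = n + 1 := by
  rw [aProd]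
  have hsupp : {p : T × T | substA p.1 p.2 = c n}
      ∩ Function.support (fun p : T × T => A1.P p.1 * A2.P p.2)
      = (fun k => (e n k, bb)) '' Set.Iic n := by
    ext p
    constructor
    · rintro ⟨hs, hp⟩
      simp only [Function.mem_support, Set.mem_setOf_eq] at hp hs
      have h1 : A1.P p.1 ≠ 0 := fun h => hp (by rw [h, zero_mul])
      have h2 : A2.P p.2 ≠ 0 := fun h => hp (by rw [h, mul_zero])
      have hc1 : countA p.1 = 1 := by
        by_contra hc; exact h1 (P_A1_ne _ hc)
      have hb : p.2 = bb := by
        by_contra hb; exact h2 (P_A2_ne _ hb)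
      rw [hb] at hs
      obtain ⟨k, hk, hek⟩ := subst_eq_c n p.1 hs hc1
      exact ⟨k, hk, Prod.ext hek.symm hb.symm⟩
    · rintro ⟨k, hk, rfl⟩
      simp only [Set.mem_Iic] at hk
      constructor
      · show substA (e n k) bb = c n
        exact substA_e n k hk
      · show A1.P (e n k) * A2.P bb ≠ 0
        rw [P_A1_one _ (countA_e n k hk), P_A2_bb]
        norm_num
  rw [← finsum_mem_inter_support, hsupp]
  rw [finsum_mem_image (by
    intro x hx y hy hxy
    simp only [Set.mem_Iic] at hx hy
    exact e_inj n x y hx hy (congrArg Prod.fst hxy))]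
  have : ∀ k ∈ Set.Iic n, A1.P (e n k) * A2.P bb = 1 := by
    intro k hk
    simp only [Set.mem_Iic] at hk
    rw [P_A1_one _ (countA_e n k hk), P_A2_bb]
  rw [finsum_mem_congr rfl this]
  rw [← Finset.coe_Iic, finsum_mem_coe_finset]
  simp

lemma P_le_weight (A : RWTA ABF arABF ℕ) (t : GTree ABF arABF) :
    A.P t ≤ ∑ᶠ q, A.ν q := by
  have : Finite A.Q := A.fin
  cases nonempty_fintype A.Q
  rw [RWTA.P, finsum_mem_eq_sum _ (Set.toFinite _), finsum_eq_sum_of_fintype]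
  exact Finset.sum_le_sum_of_subset (Finset.subset_univ _)

end AProdAux
theorem aProd_not_closed :
    ∃ A₁ A₂ : RWTA ABF arABF ℕ,
      ∀ A : RWTA ABF arABF ℕ, ¬ ∀ t : GTree ABF arABF, A.P t = aProd A₁.P A₂.P t := by
  refine ⟨AProdAux.A1, AProdAux.A2, ?_⟩
  intro A h
  have hb := AProdAux.P_le_weight A (AProdAux.c (∑ᶠ q, A.ν q))
  have h1 := h (AProdAux.c (∑ᶠ q, A.ν q))
  rw [AProdAux.aProd_c] at h1
  omega
end

section
/- Let A = (Σ,Q,ν,δ) be an RWTA over a graded alphabet Σ with weights in a commutative monoid M and let ∼ be an equivalence relation on Q that is down compatible with A. Then the quotient A_∼ realizes the same tree series as A: P_A(t) = P_{A_∼}(t) for every tree t ∈ T_Σ. -/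
variable {σ : Type} {ar : σ → ℕ} {M : Type}

theorem quot_series {σ : Type} {ar : σ → ℕ} {M : Type} [AddCommMonoid M]
    (A : RWTA σ ar M) (s : Setoid A.Q)
    (hdc : ∀ q₁ q₂ : A.Q, s.r q₁ q₂ → A.DownLang q₁ = A.DownLang q₂) :
    ∀ t : GTree σ ar, A.P t = (A.quot s).P t := by
  have key : ∀ t : GTree σ ar, ∀ q : A.Q,
      q ∈ A.Delta t ↔ Quotient.mk s q ∈ (A.quot s).Delta t := by
    intro t
    induction t with
    | node f ts ih =>
      intro q
      constructor
      · rintro ⟨qs, hqs, hδ⟩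
        exact ⟨fun i => Quotient.mk s (qs i), fun i => (ih i (qs i)).1 (hqs i),
          qs, q, fun i => rfl, rfl, hδ⟩
      · rintro ⟨Cs, hCs, qs, q', hqs, hq', hδ⟩
        have hmem : ∀ i, qs i ∈ A.Delta (ts i) := fun i => by
          rw [ih i, hqs i]; exact hCs i
        have hq'mem : q' ∈ A.Delta (.node f ts) := ⟨qs, hmem, hδ⟩
        have hrel : s.r q q' := Quotient.exact hq'.symm
        have := hdc q q' hrel
        show GTree.node f ts ∈ A.DownLang q
        rw [this]
        exact hq'mem
  intro t
  have hset : A.Delta t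
      = ⋃ C ∈ (A.quot s).Delta t, {q : A.Q | Quotient.mk s q = C} := by
    ext q
    simp only [Set.mem_iUnion, Set.mem_setOf_eq, exists_prop]
    constructor
    · intro hq
      exact ⟨Quotient.mk s q, (key t q).1 hq, rfl⟩
    · rintro ⟨C, hC, rfl⟩
      exact (key t q).2 hC
  have hdisj : ((A.quot s).Delta t).PairwiseDisjoint
      (fun C => {q : A.Q | Quotient.mk s q = C}) := by
    intro C₁ _ C₂ _ hne
    refine Set.disjoint_left.2 ?_
    rintro q h1 h2
    exact hne (h1.symm.trans h2)
  have hfin : ∀ C ∈ (A.quot s).Delta t,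
      ({q : A.Q | Quotient.mk s q = C} : Set A.Q).Finite :=
    fun _ _ => Set.toFinite _
  calc A.P t = ∑ᶠ q ∈ A.Delta t, A.ν q := rfl
    _ = ∑ᶠ C ∈ (A.quot s).Delta t, ∑ᶠ q ∈ {q : A.Q | Quotient.mk s q = C}, A.ν q := by
        rw [hset]; exact finsum_mem_biUnion hdisj (Set.toFinite _) hfin
    _ = (A.quot s).P t := rfl
end

section
/- Let Σ be a graded alphabet and t a tree in T_Σ. The subtree automaton A_t associated with t realizes the subtree series of t: P_{A_t} = SubTreeSeries_t, i.e. for every tree s ∈ T_Σ, P_{A_t}(s) equals the number of occurrences of s as a subtree of t. -/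
variable {σ : Type} {ar : σ → ℕ} {M : Type}

section SubtreeAutProof

variable {σ : Type} {ar : σ → ℕ}

lemma GTree.self_mem_subTrees (t : GTree σ ar) : t ∈ t.subTrees := by
  cases t with
  | node f ts => exact Set.mem_insert _ _

lemma GTree.child_mem_subTrees {f : σ} {ts : Fin (ar f) → GTree σ ar} (i : Fin (ar f)) :
    ts i ∈ (GTree.node f ts).subTrees :=
  Set.mem_insert_of_mem _ (Set.mem_iUnion.2 ⟨i, (ts i).self_mem_subTrees⟩)

lemma GTree.mem_subTrees_trans : ∀ {u r s : GTree σ ar},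
    r ∈ u.subTrees → s ∈ r.subTrees → s ∈ u.subTrees := by
  intro u
  induction u with
  | node f ts ih =>
    intro r s hr hs
    rcases Set.mem_insert_iff.1 hr with rfl | hr
    · exact hs
    · rcases Set.mem_iUnion.1 hr with ⟨i, hi⟩
      exact Set.mem_insert_of_mem _ (Set.mem_iUnion.2 ⟨i, ih i hi hs⟩)

lemma GTree.unsharp_node (p : σ × ℕ) (rs : Fin (ar p.1) → GTree (σ × ℕ) (fun p => ar p.1)) :
    (GTree.node p rs).unsharp = GTree.node p.1 (fun i => (rs i).unsharp) := by
  rw [GTree.unsharp, GTree.map]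
  rfl

lemma GTree.unsharp_sharpAux (u : GTree σ ar) : ∀ n : ℕ, (u.sharpAux n).unsharp = u := by
  induction u with
  | node f ts ih =>
    intro n
    rw [GTree.sharpAux, GTree.unsharp_node]
    exact congrArg (GTree.node f) (funext fun i => ih i _)

/-- The index at the root of an indexed tree. -/
def GTree.rootIdx : GTree (σ × ℕ) (fun p => ar p.1) → ℕ
  | .node p _ => p.2

lemma off_add_le {k : ℕ} (s : Fin k → ℕ) (i : Fin k) (m : ℕ) (him : i.1 < m) :
    (∑ j, if j.1 < i.1 then s j else 0) + s i ≤ ∑ j, if j.1 < m then s j else 0 := by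
  have h : s i = ∑ j, if j = i then s j else 0 := by simp
  rw [h, ← Finset.sum_add_distrib]
  refine Finset.sum_le_sum fun j _ => ?_
  rcases eq_or_ne j i with rfl | h2
  · simp [him]
  · by_cases h1 : j.1 < i.1
    · simp [h1, h2, h1.trans him]
    · simp [h1, h2]

lemma GTree.rootIdx_range : ∀ (u : GTree σ ar) (n : ℕ)
    (r : GTree (σ × ℕ) (fun p => ar p.1)), r ∈ (u.sharpAux n).subTrees →
    n ≤ r.rootIdx ∧ r.rootIdx < n + u.size := by
  intro u
  induction u with
  | node f ts ih =>
    intro n r hr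
    rw [GTree.sharpAux] at hr
    rw [GTree.size]
    rcases Set.mem_insert_iff.1 hr with rfl | hr
    · refine ⟨le_refl _, ?_⟩
      rw [GTree.rootIdx]
      omega
    · rcases Set.mem_iUnion.1 hr with ⟨i, hi⟩
      have h := ih i _ _ hi
      have h2 := off_add_le (fun j => (ts j).size) i (ar f) i.isLt
      simp only [Fin.is_lt, if_true] at h2
      omega

lemma ncard_iUnion_of_disjoint {α : Type} {k : ℕ} (S : Fin k → Set α)
    (hfin : ∀ i, (S i).Finite)
    (hdisj : ∀ i j, i ≠ j → Disjoint (S i) (S j)) :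
    (⋃ i, S i).ncard = ∑ i, (S i).ncard := by
  classical
  have he : (⋃ i, S i) = ↑(Finset.univ.biUnion fun i => (hfin i).toFinset) := by
    ext x; simp
  rw [he, Set.ncard_coe_finset, Finset.card_biUnion]
  · exact Finset.sum_congr rfl fun i _ =>
      ((Set.ncard_eq_toFinset_card (S i) (hfin i)).symm)
  · intro i _ j _ hij
    rw [Function.onFun, Finset.disjoint_left]
    intro a ha hb
    exact Set.disjoint_left.1 (hdisj i j hij)
      ((hfin i).mem_toFinset.1 ha) ((hfin j).mem_toFinset.1 hb)

lemma GTree.count_aux (u : GTree σ ar) : ∀ (n : ℕ) (s : GTree σ ar),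
    {r | r ∈ (u.sharpAux n).subTrees ∧ r.unsharp = s}.ncard = u.subCount s := by
  induction u with
  | node f ts ih =>
    intro n s
    classical
    set off : Fin (ar f) → ℕ :=
      fun i => n + 1 + ∑ j, if j.1 < i.1 then (ts j).size else 0 with hoff
    set root : GTree (σ × ℕ) (fun p => ar p.1) :=
      GTree.node (f, n) (fun i => (ts i).sharpAux (off i)) with hroot
    have hshx : (GTree.node f ts).sharpAux n = root := by rw [GTree.sharpAux]
    set A : Fin (ar f) → Set (GTree (σ × ℕ) (fun p => ar p.1)) :=
      fun i => {r | r ∈ ((ts i).sharpAux (off i)).subTrees ∧ r.unsharp = s} with hA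
    have hAfin : ∀ i, (A i).Finite := fun i =>
      (((ts i).sharpAux (off i)).subTrees_finite).subset (fun r hr => hr.1)
    have hAdisj : ∀ i j, i ≠ j → Disjoint (A i) (A j) := by
      intro i j hij
      rw [Set.disjoint_left]
      intro r hri hrj
      have h1 := GTree.rootIdx_range (ts i) (off i) r hri.1
      have h2 := GTree.rootIdx_range (ts j) (off j) r hrj.1
      rcases Nat.lt_or_ge i.1 j.1 with h | h
      · have hle := off_add_le (fun j => (ts j).size) i j.1 h
        simp only [hoff] at h1 h2
        omega
      · have hji : j.1 < i.1 := by
          rcases Nat.lt_or_ge j.1 i.1 with h' | h'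
          · exact h'
          · exact absurd (Fin.ext (Nat.le_antisymm h h')) hij.symm
        have hle := off_add_le (fun j => (ts j).size) j i.1 hji
        simp only [hoff] at h1 h2
        omega
    have hrootB : root ∉ ⋃ i, A i := by
      intro hmem
      rcases Set.mem_iUnion.1 hmem with ⟨i, hi⟩
      have h1 := GTree.rootIdx_range (ts i) (off i) root hi.1
      have : root.rootIdx = n := by rw [hroot, GTree.rootIdx]
      simp only [hoff] at h1
      omega
    have hBcard : (⋃ i, A i).ncard = ∑ i, (ts i).subCount s := by
      rw [ncard_iUnion_of_disjoint A hAfin hAdisj]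
      exact Finset.sum_congr rfl fun i _ => ih i (off i) s
    have hur : root.unsharp = GTree.node f ts := by
      rw [hroot, GTree.unsharp_node]
      exact congrArg (GTree.node f) (funext fun i => (ts i).unsharp_sharpAux _)
    rw [hshx, GTree.subCount]
    by_cases hcase : GTree.node f ts = s
    · have hsets : {r | r ∈ root.subTrees ∧ r.unsharp = s} = insert root (⋃ i, A i) := by
        ext r
        simp only [hroot, GTree.subTrees, Set.mem_insert_iff, Set.mem_iUnion,
          Set.mem_setOf_eq, hA]
        constructor
        · rintro ⟨rfl | ⟨i, hi⟩, hu⟩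
          · exact Or.inl rfl
          · exact Or.inr ⟨i, hi, hu⟩
        · rintro (rfl | ⟨i, hi, hu⟩)
          · exact ⟨Or.inl rfl, by rw [← hroot, hur]; exact hcase⟩
          · exact ⟨Or.inr ⟨i, hi⟩, hu⟩
      rw [hsets, Set.ncard_insert_of_notMem hrootB
        (Set.finite_iUnion hAfin), hBcard, if_pos hcase]
      omega
    · have hsets : {r | r ∈ root.subTrees ∧ r.unsharp = s} = ⋃ i, A i := by
        ext r
        simp only [hroot, GTree.subTrees, Set.mem_insert_iff, Set.mem_iUnion,
          Set.mem_setOf_eq, hA]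
        constructor
        · rintro ⟨rfl | ⟨i, hi⟩, hu⟩
          · exact absurd (by rw [← hroot, hur] at hu; exact hu) hcase
          · exact ⟨i, hi, hu⟩
        · rintro ⟨i, hi, hu⟩
          exact ⟨Or.inr ⟨i, hi⟩, hu⟩
      rw [hsets, hBcard, if_neg hcase]
      omega

lemma delta_char (t : GTree σ ar) : ∀ (s : GTree σ ar) (q : (subtreeAut t).Q),
    q ∈ (subtreeAut t).Delta s ↔ (q.1).unsharp = s := by
  intro s
  induction s with
  | node f ts ih =>
    intro q
    constructor
    · intro hq
      simp only [RWTA.Delta, subtreeAut, Set.mem_setOf_eq] at hq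
      obtain ⟨qs, hqs, n, hqe⟩ := hq
      rw [hqe, GTree.unsharp_node]
      exact congrArg (GTree.node f) (funext fun i => (ih i (qs i)).1 (hqs i))
    · intro h
      obtain ⟨r, hr⟩ := q
      cases r with
      | node p rs =>
        obtain ⟨g, m⟩ := p
        rw [GTree.unsharp_node] at h
        injection h with h1 h2
        subst h1
        have h2' : (fun i => (rs i).unsharp) = ts := eq_of_heq h2
        have hmem : ∀ i, rs i ∈ t.sharp.subTrees := fun i =>
          GTree.mem_subTrees_trans hr (@GTree.child_mem_subTrees (σ × ℕ) (fun p => ar p.1) (g, m) rs i)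
        refine ⟨fun i => ⟨rs i, hmem i⟩, fun i => (ih i _).2 ?_, m, rfl⟩
        exact congrFun h2' i

lemma finsum_mem_ones {α : Type} (D : Set α) (hD : D.Finite) :
    ∑ᶠ q ∈ D, (1 : ℕ) = D.ncard := by
  rw [← Set.Finite.coe_toFinset hD, finsum_mem_coe_finset, Set.ncard_coe_finset]
  simp

end SubtreeAutProof


theorem subtreeAut_series {σ : Type} {ar : σ → ℕ} (t : GTree σ ar) (s : GTree σ ar) :
    (subtreeAut t).P s = t.subCount s := by
  classical
  have hset : (subtreeAut t).Delta s = {q : (subtreeAut t).Q | (q.1).unsharp = s} :=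
    Set.ext fun q => delta_char t s q
  have hfin : ({q : (subtreeAut t).Q | (q.1).unsharp = s}).Finite := Set.toFinite _
  have h1 : (subtreeAut t).P s
      = ({q : (subtreeAut t).Q | (q.1).unsharp = s}).ncard := by
    rw [RWTA.P, hset, ← finsum_mem_ones _ hfin]
    rfl
  have h2 : (Subtype.val '' {q : (subtreeAut t).Q | (q.1).unsharp = s})
      = {r | r ∈ t.sharp.subTrees ∧ r.unsharp = s} := by
    ext r
    constructor
    · rintro ⟨⟨r', hr'⟩, hq, rfl⟩
      exact ⟨hr', hq⟩
    · rintro ⟨hr, hu⟩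
      exact ⟨⟨r, hr⟩, hu, rfl⟩
  rw [h1, ← Set.ncard_image_of_injective {q : (subtreeAut t).Q | (q.1).unsharp = s} Subtype.val_injective]
  erw [h2]
  rw [GTree.sharp]
  exact GTree.count_aux t 0 s
end

section
/- Let Σ be a graded alphabet, t a tree in T_Σ, and A_t = (Σ,Q,ν,δ) the subtree automaton associated with t. Then for every tree r ∈ SubTree(t), Δ_{A_t}(r) = {r' ∈ Q | h(r') = r}, the set of indexed subtrees of t^♯ whose de-indexing is r. -/
variable {σ : Type} {ar : σ → ℕ} {M : Type}

theorem GTree.mem_subTrees_self {σ : Type} {ar : σ → ℕ} (t : GTree σ ar) :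
    t ∈ t.subTrees := by
  cases t with
  | node f ts => exact Set.mem_insert _ _

theorem GTree.subTrees_trans {σ : Type} {ar : σ → ℕ} {s : GTree σ ar} {f : σ}
    {ts : Fin (ar f) → GTree σ ar} (h : GTree.node f ts ∈ s.subTrees)
    (i : Fin (ar f)) : ts i ∈ s.subTrees := by
  induction s with
  | node g ss ih =>
    rcases h with h | h
    · cases h
      exact Set.mem_insert_iff.2 (Or.inr (Set.mem_iUnion.2 ⟨i, (ts i).mem_subTrees_self⟩))
    · rcases Set.mem_iUnion.1 h with ⟨j, hj⟩
      exact Set.mem_insert_iff.2 (Or.inr (Set.mem_iUnion.2 ⟨j, ih j hj⟩))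

theorem subtreeAut_delta_unsharp {σ : Type} {ar : σ → ℕ} (t : GTree σ ar) :
    ∀ (r : GTree σ ar) (q : (subtreeAut t).Q),
      q ∈ (subtreeAut t).Delta r → GTree.unsharp q.1 = r := by
  intro r
  induction r with
  | node f ts ih =>
    rintro q ⟨qs, hqs, n, hq⟩
    rw [hq]
    show GTree.node f _ = GTree.node f ts
    congr 1
    funext i
    exact ih i _ (hqs i)

theorem subtreeAut_mem_delta_self {σ : Type} {ar : σ → ℕ} (t : GTree σ ar) :
    ∀ (s : GTree (σ × ℕ) (fun p => ar p.1)) (hs : s ∈ t.sharp.subTrees),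
      (⟨s, hs⟩ : (subtreeAut t).Q) ∈ (subtreeAut t).Delta (GTree.unsharp s) := by
  intro s
  induction s with
  | node p ss ih =>
    intro hs
    exact ⟨fun i => ⟨ss i, GTree.subTrees_trans hs i⟩,
      fun i => ih (Fin.cast rfl i) _, p.2, rfl⟩

theorem subtreeAut_delta {σ : Type} {ar : σ → ℕ} (t : GTree σ ar)
    (r : GTree σ ar) (hr : r ∈ t.subTrees) :
    (subtreeAut t).Delta r = {r' : (subtreeAut t).Q | GTree.unsharp r'.1 = r} := by
  ext ⟨q, hq⟩
  constructor
  · intro h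
    exact subtreeAut_delta_unsharp t r _ h
  · intro h
    exact h ▸ subtreeAut_mem_delta_self t q hq
end

section
/- Let Σ be a graded alphabet, L a finite tree language over Σ, and A_L = (Σ,Q,ν,δ) the sequential subtree automaton associated with L. Then for every tree r ∈ SubTreeSet(L), Δ_{A_L}(r) = {r}. -/
variable {σ : Type} {ar : σ → ℕ} {M : Type}

theorem GTree.subTrees_child {t : GTree σ ar} {f : σ} {ts : Fin (ar f) → GTree σ ar}
    (h : GTree.node f ts ∈ t.subTrees) (i : Fin (ar f)) : ts i ∈ t.subTrees := by
  induction t with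
  | node g us ih =>
    rcases h with h | h
    · cases h
      refine Set.mem_insert_iff.2 (Or.inr (Set.mem_iUnion.2 ⟨i, ?_⟩))
      cases hts : ts i with
      | node g' us' => exact Set.mem_insert _ _
    · rcases Set.mem_iUnion.1 h with ⟨j, hj⟩
      exact Set.mem_insert_iff.2 (Or.inr (Set.mem_iUnion.2 ⟨j, ih j hj⟩))

theorem subTreeSet_child {L : Set (GTree σ ar)} {f : σ} {ts : Fin (ar f) → GTree σ ar}
    (h : GTree.node f ts ∈ subTreeSet L) (i : Fin (ar f)) : ts i ∈ subTreeSet L := by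
  rcases Set.mem_iUnion₂.1 h with ⟨t, ht, hsub⟩
  exact Set.mem_iUnion₂.2 ⟨t, ht, t.subTrees_child hsub i⟩

theorem langSubtreeAut_delta {σ : Type} {ar : σ → ℕ}
    (L : Set (GTree σ ar)) (hL : L.Finite)
    (r : GTree σ ar) (hr : r ∈ subTreeSet L) :
    (langSubtreeAut L hL).Delta r = {⟨r, hr⟩} := by
  induction r with
  | node f ts ih =>
    ext ⟨q, hqmem⟩
    constructor
    · rintro ⟨qs, hqs, hδ⟩
      let qs' : Fin (ar f) → {r // r ∈ subTreeSet L} := qs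
      have hq : ∀ i, qs' i = ⟨ts i, subTreeSet_child hr i⟩ := fun i => by
        have := hqs i
        rw [ih i (subTreeSet_child hr i)] at this
        exact this
      have : q = GTree.node f ts := by
        rw [show q = GTree.node f (fun i => (qs' i : GTree σ ar)) from hδ]
        congr 1; funext i; rw [hq i]
      exact Subtype.ext this
    · intro hq
      cases Subtype.ext_iff.1 hq
      exact ⟨fun i => ⟨ts i, subTreeSet_child hr i⟩,
        fun i => by rw [ih i (subTreeSet_child hr i)]; rfl, rfl⟩
end
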